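/- Let μ₀ be a Borel probability measure on ℝ with mean 0 and variance 1 whose distribution function F₀ is continuous and strictly increasing, let α∈(0,1), let 0<ε<1, and let 𝓛_ε be the set of probability measures of the form (1−θ)μ₀ + θν with θ∈[0,ε] and ν any Borel probability measure on ℝ with mean 0 and variance 1. If α ≤ (1−ε)F₀(0), then inf_{μ∈𝓛_ε} VaR_α(μ) = VaR_{α/(1−ε)}(μ₀), and sup_{μ∈𝓛_ε} VaR_α(μ) is the unique r>−F₀⁻¹(α) solving (1−ε)F₀(−r) + ε/(1+r²) = α. -/

import Mathlib

open MeasureTheory Set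

/-- The distribution function of a measure: `F_μ(x) = μ((-∞, x])`. -/
noncomputable def distFun (μ : Measure ℝ) (x : ℝ) : ℝ := (μ (Iic x)).toReal

/-- The lower quantile of order `α`: `q_α(μ) = inf {x : F_μ(x) ≥ α}`. -/
noncomputable def lowerQuantile (μ : Measure ℝ) (α : ℝ) : ℝ :=
  sInf {x : ℝ | α ≤ distFun μ x}

/-- The Value-at-Risk of order `α`: `VaR_α(μ) = -q_α(μ)`. -/
noncomputable def VaR (μ : Measure ℝ) (α : ℝ) : ℝ := - lowerQuantile μ α

namespace ExtremalVaRAux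

lemma distFun_nonneg (ν : Measure ℝ) (x : ℝ) : 0 ≤ distFun ν x := ENNReal.toReal_nonneg

lemma integrable_sq {ν : Measure ℝ} (h2 : (∫ x, x ^ 2 ∂ν) = 1) :
    Integrable (fun x : ℝ => x ^ 2) ν := by
  by_contra h
  rw [integral_undef h] at h2
  norm_num at h2

lemma integrable_id {ν : Measure ℝ} [IsProbabilityMeasure ν] (h2 : (∫ x, x ^ 2 ∂ν) = 1) :
    Integrable (fun x : ℝ => x) ν := by
  have hsq := integrable_sq h2
  have hg : Integrable (fun x : ℝ => 1 + x ^ 2) ν := (integrable_const 1).add hsq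
  refine hg.mono measurable_id.aestronglyMeasurable ?_
  filter_upwards with x
  have h1 : ‖(1:ℝ) + x ^ 2‖ = 1 + x ^ 2 := by
    rw [Real.norm_eq_abs, abs_of_nonneg (by positivity)]
  rw [Real.norm_eq_abs, h1]
  nlinarith [sq_abs x, abs_nonneg x, sq_nonneg (|x| - 1)]

lemma cantelli_aux {ν : Measure ℝ} [IsProbabilityMeasure ν]
    (h1 : (∫ x, x ∂ν) = 0) (h2 : (∫ x, x ^ 2 ∂ν) = 1) (u : ℝ) :
    (∫ y, (u - y) ^ 2 ∂ν) = u ^ 2 + 1 := by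
  have hsq := integrable_sq h2
  have hid := integrable_id h2
  have heq : (fun y : ℝ => (u - y) ^ 2) = fun y => y ^ 2 + ((-(2*u)) * y + u ^ 2) := by
    ext y; ring
  have hi1 : Integrable (fun y : ℝ => -(2*u) * y) ν := hid.const_mul _
  have hi2 : Integrable (fun y : ℝ => -(2*u) * y + u ^ 2) ν := hi1.add (integrable_const _)
  rw [heq, integral_add hsq hi2, integral_add hi1 (integrable_const _), integral_const_mul,
    h1, h2, integral_const]
  simp
  ring

lemma integrable_quad {ν : Measure ℝ} [IsProbabilityMeasure ν]
    (h2 : (∫ x, x ^ 2 ∂ν) = 1) (u : ℝ) :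
    Integrable (fun y : ℝ => (u - y) ^ 2) ν := by
  have hsq := integrable_sq h2
  have hid := integrable_id h2
  have heq : (fun y : ℝ => (u - y) ^ 2) = fun y => y ^ 2 + ((-(2*u)) * y + u ^ 2) := by
    ext y; ring
  rw [heq]
  exact hsq.add ((hid.const_mul _).add (integrable_const _))

lemma cantelli_bound {ν : Measure ℝ} [IsProbabilityMeasure ν]
    (h1 : (∫ x, x ∂ν) = 0) (h2 : (∫ x, x ^ 2 ∂ν) = 1) {x x' u : ℝ}
    (hx : x < 0) (hx' : x' < x) (hu : 0 < u) :
    (u - x) ^ 2 * (distFun ν x - distFun ν x') + (u - x') ^ 2 * distFun ν x'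
      ≤ u ^ 2 + 1 := by
  have hint := integrable_quad h2 u
  have hsplit : ν (Iic x) = ν (Iic x') + ν (Ioc x' x) := by
    rw [← measure_union (Iic_disjoint_Ioc le_rfl) measurableSet_Ioc,
      Iic_union_Ioc_eq_Iic hx'.le]
  have hmeas : distFun ν x = distFun ν x' + (ν (Ioc x' x)).toReal := by
    rw [distFun, hsplit, ENNReal.toReal_add (measure_ne_top _ _) (measure_ne_top _ _)]; rfl
  have hb1 : (u - x') ^ 2 * (ν (Iic x')).toReal ≤ ∫ y in Iic x', (u - y) ^ 2 ∂ν := by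
    refine setIntegral_ge_of_const_le_real measurableSet_Iic (measure_ne_top _ _) ?_
      hint.integrableOn
    intro y hy
    have : u - x' ≤ u - y := by simp at hy; linarith
    have h0 : 0 < u - x' := by linarith
    nlinarith
  have hb2 : (u - x) ^ 2 * (ν (Ioc x' x)).toReal ≤ ∫ y in Ioc x' x, (u - y) ^ 2 ∂ν := by
    refine setIntegral_ge_of_const_le_real measurableSet_Ioc (measure_ne_top _ _) ?_
      hint.integrableOn
    intro y hy
    have hy2 := hy.2
    have : u - x ≤ u - y := by linarith
    have h0 : 0 < u - x := by linarith
    nlinarith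
  have hsum : (∫ y in Iic x', (u - y) ^ 2 ∂ν) + (∫ y in Ioc x' x, (u - y) ^ 2 ∂ν)
      = ∫ y in Iic x, (u - y) ^ 2 ∂ν := by
    rw [← setIntegral_union (Iic_disjoint_Ioc le_rfl) measurableSet_Ioc
      hint.integrableOn hint.integrableOn, Iic_union_Ioc_eq_Iic hx'.le]
  have hle : (∫ y in Iic x, (u - y) ^ 2 ∂ν) ≤ ∫ y, (u - y) ^ 2 ∂ν :=
    setIntegral_le_integral hint (by filter_upwards with y; positivity)
  rw [cantelli_aux h1 h2 u] at hle
  have hF : distFun ν x - distFun ν x' = (ν (Ioc x' x)).toReal := by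
    rw [hmeas]; ring
  rw [hF]
  have : distFun ν x' = (ν (Iic x')).toReal := rfl
  rw [this]
  linarith

lemma cantelli_aux2 {ν : Measure ℝ} [IsProbabilityMeasure ν]
    (h1 : (∫ x, x ∂ν) = 0) (h2 : (∫ x, x ^ 2 ∂ν) = 1) {x : ℝ} (hx : x < 0) :
    (-1/x - x) ^ 2 * distFun ν x + (2*(-1/x - x) + 1) * distFun ν (x-1)
      ≤ (-1/x) ^ 2 + 1 := by
  have hu : 0 < -1/x := div_pos_iff.mpr (Or.inr ⟨by norm_num, hx⟩)
  have h := cantelli_bound h1 h2 hx (show x - 1 < x by linarith) hu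
  nlinarith [h]

lemma cantelli {ν : Measure ℝ} [IsProbabilityMeasure ν]
    (h1 : (∫ x, x ∂ν) = 0) (h2 : (∫ x, x ^ 2 ∂ν) = 1) {x : ℝ} (hx : x < 0) :
    distFun ν x ≤ 1 / (1 + x ^ 2) := by
  have h := cantelli_aux2 h1 h2 hx
  have hu : 0 < -1/x := div_pos_iff.mpr (Or.inr ⟨by norm_num, hx⟩)
  have hd : 0 ≤ 2*(-1/x - x) + 1 := by linarith
  have h2' : (-1/x - x) ^ 2 * distFun ν x ≤ (-1/x) ^ 2 + 1 := by
    nlinarith [mul_nonneg hd (distFun_nonneg ν (x-1))]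
  have hx0 : x ≠ 0 := hx.ne
  have key : (-1/x - x) ^ 2 * x ^ 2 = (1 + x ^ 2) ^ 2 := by field_simp; ring
  have key2 : ((-1/x) ^ 2 + 1) * x ^ 2 = 1 + x ^ 2 := by field_simp
  have hx2 : (0:ℝ) < x ^ 2 := by positivity
  have h3 : (1 + x ^ 2) ^ 2 * distFun ν x ≤ 1 + x ^ 2 := by
    have h4 := mul_le_mul_of_nonneg_right h2' hx2.le
    calc (1 + x ^ 2) ^ 2 * distFun ν x = (-1/x - x) ^ 2 * x ^ 2 * distFun ν x := by rw [key]
      _ = (-1/x - x) ^ 2 * distFun ν x * x ^ 2 := by ring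
      _ ≤ ((-1/x) ^ 2 + 1) * x ^ 2 := h4
      _ = 1 + x ^ 2 := key2
  have hpos : (0:ℝ) < 1 + x ^ 2 := by positivity
  rw [le_div_iff₀ hpos]
  exact le_of_mul_le_mul_left (by nlinarith [h3]) hpos

lemma cantelli_strict {ν : Measure ℝ} [IsProbabilityMeasure ν]
    (h1 : (∫ x, x ∂ν) = 0) (h2 : (∫ x, x ^ 2 ∂ν) = 1) {x : ℝ} (hx : x < 0)
    (hpos : 0 < distFun ν (x-1)) :
    distFun ν x < 1 / (1 + x ^ 2) := by
  have h := cantelli_aux2 h1 h2 hx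
  have hu : 0 < -1/x := div_pos_iff.mpr (Or.inr ⟨by norm_num, hx⟩)
  have hd : 0 < 2*(-1/x - x) + 1 := by linarith
  have h2' : (-1/x - x) ^ 2 * distFun ν x < (-1/x) ^ 2 + 1 := by
    nlinarith [mul_pos hd hpos]
  have hx0 : x ≠ 0 := hx.ne
  have key : (-1/x - x) ^ 2 * x ^ 2 = (1 + x ^ 2) ^ 2 := by field_simp; ring
  have key2 : ((-1/x) ^ 2 + 1) * x ^ 2 = 1 + x ^ 2 := by field_simp
  have hx2 : (0:ℝ) < x ^ 2 := by positivity
  have h3 : (1 + x ^ 2) ^ 2 * distFun ν x < 1 + x ^ 2 := by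
    have h4 := mul_lt_mul_of_pos_right h2' hx2
    calc (1 + x ^ 2) ^ 2 * distFun ν x = (-1/x - x) ^ 2 * x ^ 2 * distFun ν x := by rw [key]
      _ = (-1/x - x) ^ 2 * distFun ν x * x ^ 2 := by ring
      _ < ((-1/x) ^ 2 + 1) * x ^ 2 := h4
      _ = 1 + x ^ 2 := key2
  have hpos : (0:ℝ) < 1 + x ^ 2 := by positivity
  rw [lt_div_iff₀ hpos]
  exact lt_of_mul_lt_mul_left (by nlinarith [h3]) hpos.le

lemma lowerQuantile_eq {μ : Measure ℝ} (hmono : StrictMono (distFun μ)) {β x : ℝ}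
    (hx : distFun μ x = β) : lowerQuantile μ β = x := by
  have hlb : ∀ y ∈ {y : ℝ | β ≤ distFun μ y}, x ≤ y := by
    intro y hy
    by_contra h
    push_neg at h
    have := hmono h
    rw [hx] at this
    exact absurd hy (by simp only [mem_setOf_eq, not_le]; linarith)
  have hmem : x ∈ {y : ℝ | β ≤ distFun μ y} := by simp [hx]
  exact le_antisymm (csInf_le ⟨x, hlb⟩ hmem) (le_csInf ⟨x, hmem⟩ hlb)

lemma distFun_mix (μ₀ ν : Measure ℝ) [IsFiniteMeasure μ₀] [IsFiniteMeasure ν] {θ : ℝ}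
    (h0 : 0 ≤ θ) (h1 : θ ≤ 1) (x : ℝ) :
    distFun (ENNReal.ofReal (1 - θ) • μ₀ + ENNReal.ofReal θ • ν) x
      = (1 - θ) * distFun μ₀ x + θ * distFun ν x := by
  simp only [distFun, Measure.add_apply, Measure.smul_apply, smul_eq_mul]
  rw [ENNReal.toReal_add (ENNReal.mul_ne_top ENNReal.ofReal_ne_top (measure_ne_top _ _))
    (ENNReal.mul_ne_top ENNReal.ofReal_ne_top (measure_ne_top _ _)),
    ENNReal.toReal_mul, ENNReal.toReal_mul, ENNReal.toReal_ofReal (by linarith),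
    ENNReal.toReal_ofReal h0]

lemma twoPoint (a : ℝ) (ha : a < 0) :
    ∃ ν : Measure ℝ, IsProbabilityMeasure ν ∧ (∫ x, x ∂ν) = 0 ∧ (∫ x, x ^ 2 ∂ν) = 1 ∧
      (∀ z : ℝ, z < -1/a → distFun ν z ≤ 1/(1+a^2)) ∧ distFun ν a = 1/(1+a^2) := by
  have ha0 : a ≠ 0 := ha.ne
  have ha2 : 0 < a ^ 2 := by nlinarith
  set p : ℝ := 1/(1+a^2) with hp
  have hp0 : 0 < p := by positivity
  have hp1 : p < 1 := by
    rw [hp, div_lt_one (by positivity)]; nlinarith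
  set b : ℝ := -1/a with hb
  have hb0 : 0 < b := div_pos_iff.mpr (Or.inr ⟨by norm_num, ha⟩)
  set ν : Measure ℝ := ENNReal.ofReal p • Measure.dirac a + ENNReal.ofReal (1-p) • Measure.dirac b with hν
  have happ : ∀ s : Set ℝ, MeasurableSet s →
      ν s = ENNReal.ofReal p * s.indicator 1 a + ENNReal.ofReal (1-p) * s.indicator 1 b := by
    intro s hs
    rw [hν]
    simp only [Measure.add_apply, Measure.smul_apply, smul_eq_mul,
      Measure.dirac_apply' _ hs]
  have hFcalc : ∀ z : ℝ, distFun ν z = (if a ≤ z then p else 0) + (if b ≤ z then 1-p else 0) := by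
    intro z
    rw [distFun, happ _ measurableSet_Iic]
    by_cases h1 : a ≤ z <;> by_cases h2 : b ≤ z <;>
      simp only [Set.indicator_apply, mem_Iic, Pi.one_apply, h1, h2, if_true, if_false,
        mul_one, mul_zero, add_zero, zero_add]
    · rw [← ENNReal.ofReal_add hp0.le (by linarith), ENNReal.toReal_ofReal (by linarith)]
    · exact ENNReal.toReal_ofReal hp0.le
    · exact ENNReal.toReal_ofReal (by linarith)
    · simp
  have hprob : IsProbabilityMeasure ν := by
    constructor
    rw [happ univ MeasurableSet.univ]
    simp only [Set.indicator_univ, Pi.one_apply, mul_one]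
    rw [← ENNReal.ofReal_add hp0.le (by linarith)]
    norm_num
  have hfi : ∀ (f : ℝ → ℝ) (c : ℝ), Measurable f → Integrable f (Measure.dirac c) := by
    intro f c hf
    refine ⟨hf.aestronglyMeasurable, ?_⟩
    rw [HasFiniteIntegral, lintegral_dirac' c (by measurability)]
    exact ENNReal.coe_lt_top
  have hdint : ∀ f : ℝ → ℝ, Measurable f → (∫ x, f x ∂ν) = p * f a + (1-p) * f b := by
    intro f hf
    rw [hν, integral_add_measure ((hfi f a hf).smul_measure ENNReal.ofReal_ne_top)
      ((hfi f b hf).smul_measure ENNReal.ofReal_ne_top),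
      integral_smul_measure, integral_smul_measure,
      integral_dirac' f a hf.stronglyMeasurable, integral_dirac' f b hf.stronglyMeasurable,
      ENNReal.toReal_ofReal hp0.le, ENNReal.toReal_ofReal (by linarith)]
    simp [smul_eq_mul]
  refine ⟨ν, hprob, ?_, ?_, ?_, ?_⟩
  · rw [hdint (fun x => x) measurable_id]
    rw [hp, hb]
    field_simp
    ring
  · rw [hdint (fun x => x ^ 2) (measurable_id.pow_const 2)]
    rw [hp, hb]
    field_simp
    ring
  · intro z hz
    rw [hFcalc z]
    have h2 : ¬ (b ≤ z) := not_le.2 hz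
    rw [if_neg h2]
    split_ifs with h1
    · simp
    · simp [hp0.le]
  · rw [hFcalc a]
    rw [if_pos le_rfl, if_neg (not_le.2 (lt_trans ha hb0))]
    simp

end ExtremalVaRAux


set_option maxHeartbeats 1000000 in
/-- Let `μ₀` be a standard probability measure (mean 0, variance 1) with
continuous, strictly increasing distribution function `F₀`, and let `𝓛_ε` be
the set of mixtures `(1−θ)μ₀ + θν`, `θ ∈ [0,ε]`, `ν` standard. If
`α ≤ (1−ε)F₀(0)`, then `inf_{μ ∈ 𝓛_ε} VaR_α(μ) = VaR_{α/(1−ε)}(μ₀)` and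
`sup_{μ ∈ 𝓛_ε} VaR_α(μ)` is the unique `r > −F₀⁻¹(α)` solving
`(1−ε)F₀(−r) + ε/(1+r²) = α`. -/
theorem extremal_VaR_mixtures (μ₀ : Measure ℝ) [IsProbabilityMeasure μ₀]
    (hmean : (∫ x, x ∂μ₀) = 0) (hvar : (∫ x, x ^ 2 ∂μ₀) = 1)
    (hcont : Continuous (distFun μ₀)) (hmono : StrictMono (distFun μ₀))
    (α : ℝ) (hα : α ∈ Ioo (0 : ℝ) 1) (ε : ℝ) (hε : ε ∈ Ioo (0 : ℝ) 1)
    (Lε : Set (Measure ℝ))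
    (hLε : Lε = {μ | ∃ θ ∈ Icc (0 : ℝ) ε, ∃ ν : Measure ℝ,
      (IsProbabilityMeasure ν ∧ (∫ x, x ∂ν) = 0 ∧ (∫ x, x ^ 2 ∂ν) = 1) ∧
      μ = ENNReal.ofReal (1 - θ) • μ₀ + ENNReal.ofReal θ • ν})
    (hcond : α ≤ (1 - ε) * distFun μ₀ 0) :
    sInf ((fun μ : Measure ℝ => VaR μ α) '' Lε) = VaR μ₀ (α / (1 - ε)) ∧
    (- lowerQuantile μ₀ α < sSup ((fun μ : Measure ℝ => VaR μ α) '' Lε) ∧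
      (1 - ε) * distFun μ₀ (- sSup ((fun μ : Measure ℝ => VaR μ α) '' Lε)) +
        ε / (1 + (sSup ((fun μ : Measure ℝ => VaR μ α) '' Lε)) ^ 2) = α ∧
      ∀ r : ℝ, - lowerQuantile μ₀ α < r →
        (1 - ε) * distFun μ₀ (-r) + ε / (1 + r ^ 2) = α →
        r = sSup ((fun μ : Measure ℝ => VaR μ α) '' Lε)) := by
  obtain ⟨hα0, hα1⟩ := hα
  obtain ⟨hε0, hε1⟩ := hε
  have h1ε : (0:ℝ) < 1 - ε := by linarith
  have hFpos : ∀ x : ℝ, 0 < distFun μ₀ x := fun x =>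
    lt_of_le_of_lt (ExtremalVaRAux.distFun_nonneg μ₀ (x-1)) (hmono (show x-1 < x by linarith))
  have hIVT : ∀ β : ℝ, 0 < β → β ≤ distFun μ₀ 0 → ∃ q ≤ 0, distFun μ₀ q = β := by
    intro β hβ0 hβF
    have hinv : 0 < 1/β := by positivity
    have hneg : -(1/β) < 0 := by linarith
    have hcan := ExtremalVaRAux.cantelli hmean hvar hneg
    have hlt : distFun μ₀ (-(1/β)) < β := by
      refine lt_of_le_of_lt hcan ?_
      rw [div_lt_iff₀ (by positivity)]
      have he : β * (1 + (-(1/β))^2) = β + 1/β := by field_simp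
      rw [he]
      have hbb : β * (1/β) = 1 := by field_simp
      nlinarith [sq_nonneg (β - 1), hβ0, hbb]
    obtain ⟨q, hq, hFq⟩ := intermediate_value_Icc (by linarith : -(1/β) ≤ (0:ℝ))
      hcont.continuousOn ⟨hlt.le, hβF⟩
    exact ⟨q, hq.2, hFq⟩
  have hF0 : α ≤ distFun μ₀ 0 := by nlinarith [hFpos 0, hcond, hε0]
  obtain ⟨β, hβ⟩ : ∃ b : ℝ, b = α / (1 - ε) := ⟨_, rfl⟩
  have hβ0 : 0 < β := by rw [hβ]; exact div_pos hα0 h1ε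
  have hβα : (1 - ε) * β = α := by rw [hβ, mul_comm, div_mul_cancel₀ _ h1ε.ne']
  have hβF : β ≤ distFun μ₀ 0 := by
    rw [hβ, div_le_iff₀ h1ε]; linarith [hcond]
  obtain ⟨qs, hqs0, hFqs⟩ := hIVT β hβ0 hβF
  obtain ⟨q0, hq00, hFq0⟩ := hIVT α hα0 hF0
  have hq0neg : q0 < 0 := by
    have h1 : distFun μ₀ q0 < distFun μ₀ 0 := by
      rw [hFq0]; nlinarith [hFpos 0, hcond, hε0]
    exact hmono.lt_iff_lt.mp h1
  have hlq0 : lowerQuantile μ₀ α = q0 := ExtremalVaRAux.lowerQuantile_eq hmono hFq0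
  have hlqs : lowerQuantile μ₀ β = qs := ExtremalVaRAux.lowerQuantile_eq hmono hFqs
  obtain ⟨g, hg⟩ : ∃ g' : ℝ → ℝ, g' = fun x => (1 - ε) * distFun μ₀ x + ε / (1 + x ^ 2) :=
    ⟨_, rfl⟩
  have hgcont : Continuous g := by
    rw [hg]
    exact (continuous_const.mul hcont).add
      (continuous_const.div (continuous_const.add (continuous_pow 2)) (fun x => by positivity))
  have hgmono : ∀ x y : ℝ, x < y → y ≤ 0 → g x < g y := by
    intro x y hxy hy0
    have h1 : distFun μ₀ x < distFun μ₀ y := hmono hxy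
    have h2 : 1 + y ^ 2 ≤ 1 + x ^ 2 := by nlinarith
    have h3 : ε / (1 + x ^ 2) ≤ ε / (1 + y ^ 2) := by
      rw [div_le_div_iff₀ (by positivity) (by positivity)]
      nlinarith [hε0]
    simp only [hg]
    nlinarith [mul_lt_mul_of_pos_left h1 h1ε]
  have hstrict : distFun μ₀ q0 < 1 / (1 + q0 ^ 2) :=
    ExtremalVaRAux.cantelli_strict hmean hvar hq0neg (hFpos _)
  have hgq0 : α < g q0 := by
    have e : g q0 = (1 - ε) * α + ε / (1 + q0 ^ 2) := by simp only [hg]; rw [hFq0]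
    have h4 : α < 1 / (1 + q0 ^ 2) := hFq0 ▸ hstrict
    have h5 : ε * α < ε * (1 / (1 + q0 ^ 2)) := (mul_lt_mul_iff_right₀ hε0).2 h4
    have h6 : ε * (1 / (1 + q0 ^ 2)) = ε / (1 + q0 ^ 2) := by ring
    rw [e]
    linarith [h5, h6]
  obtain ⟨a0, ha0⟩ : ∃ x : ℝ, x = min (q0 - 1) (-(1/α)) := ⟨_, rfl⟩
  have ha0q : a0 < q0 := by
    rw [ha0]; exact lt_of_le_of_lt (min_le_left _ _) (by linarith)
  have ha0neg : a0 < 0 := lt_trans ha0q hq0neg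
  have hga0 : g a0 < α := by
    have hcan := ExtremalVaRAux.cantelli hmean hvar ha0neg
    have h1 : g a0 ≤ 1 / (1 + a0 ^ 2) := by
      simp only [hg]
      have hh := mul_le_mul_of_nonneg_left hcan h1ε.le
      have h6 : (1-ε) * (1/(1+a0^2)) + ε * (1/(1+a0^2)) = 1/(1+a0^2) := by ring
      have h7 : ε / (1+a0^2) = ε * (1/(1+a0^2)) := by ring
      linarith [hh, h6, h7]
    have hinvα : 0 < 1/α := by positivity
    have h3 : (1/α) ^ 2 ≤ a0 ^ 2 := by
      have hmr : a0 ≤ -(1/α) := by rw [ha0]; exact min_le_right _ _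
      nlinarith [hmr, hinvα, sq_nonneg (a0 + 1/α)]
    have h4 : 1 / (1 + a0 ^ 2) ≤ 1 / (1 + (1/α) ^ 2) := by
      rw [div_le_div_iff₀ (by positivity) (by positivity)]
      nlinarith
    have h5 : 1 / (1 + (1/α) ^ 2) < α := by
      rw [div_lt_iff₀ (by positivity)]
      have he : α * (1 + (1/α) ^ 2) = α + 1/α := by field_simp
      rw [he]
      have h6 : (1:ℝ) < 1/α := one_lt_one_div hα0 hα1
      linarith
    linarith [h1, h4, h5]
  obtain ⟨xs, hxs, hgxs⟩ := intermediate_value_Icc ha0q.le hgcont.continuousOn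
    ⟨hga0.le, hgq0.le⟩
  have hxsq0 : xs < q0 := by
    rcases lt_or_eq_of_le hxs.2 with h | h
    · exact h
    · rw [h] at hgxs; linarith [hgq0]
  have hxsneg : xs < 0 := hxsq0.trans hq0neg
  set T := (fun μ : Measure ℝ => VaR μ α) '' Lε with hT
  have hunpack : ∀ μ ∈ Lε, (∀ z : ℝ, z < 0 → distFun μ z ≤ g z) ∧ α ≤ distFun μ qs := by
    intro μ hμ
    rw [hLε] at hμ
    obtain ⟨θ, ⟨hθ0, hθε⟩, ν, ⟨hνP, hν1, hν2⟩, rfl⟩ := hμ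
    haveI := hνP
    have hθ1 : θ ≤ 1 := hθε.trans hε1.le
    constructor
    · intro z hz
      rw [ExtremalVaRAux.distFun_mix μ₀ ν hθ0 hθ1]
      have hcν := ExtremalVaRAux.cantelli hν1 hν2 hz
      have hcμ := ExtremalVaRAux.cantelli hmean hvar hz
      simp only [hg]
      have hb : ε / (1 + z ^ 2) = ε * (1 / (1 + z ^ 2)) := by ring
      nlinarith [mul_le_mul_of_nonneg_left hcν hθ0,
        mul_le_mul_of_nonneg_left hcμ (sub_nonneg.2 hθε), hb]
    · rw [ExtremalVaRAux.distFun_mix μ₀ ν hθ0 hθ1]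
      nlinarith [mul_nonneg hθ0 (ExtremalVaRAux.distFun_nonneg ν qs),
        mul_le_mul_of_nonneg_right (show 1-ε ≤ 1-θ by linarith)
          (ExtremalVaRAux.distFun_nonneg μ₀ qs), hβα, hFqs]
  have hSlb : ∀ μ ∈ Lε, ∀ z ∈ {x : ℝ | α ≤ distFun μ x}, xs ≤ z := by
    intro μ hμ z hz
    by_contra hc
    push_neg at hc
    have hz0 : z < 0 := hc.trans hxsneg
    have h1 := (hunpack μ hμ).1 z hz0
    have h2 : g z < g xs := hgmono z xs hc hxsneg.le
    rw [hgxs] at h2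
    simp only [mem_setOf_eq] at hz
    linarith
  have hq_le : ∀ μ ∈ Lε, xs ≤ lowerQuantile μ α ∧ lowerQuantile μ α ≤ qs := by
    intro μ hμ
    have hne : qs ∈ {x : ℝ | α ≤ distFun μ x} := (hunpack μ hμ).2
    exact ⟨le_csInf ⟨qs, hne⟩ (hSlb μ hμ), csInf_le ⟨xs, hSlb μ hμ⟩ hne⟩
  have hμ₀mem : μ₀ ∈ Lε := by
    rw [hLε]
    refine ⟨0, ⟨le_rfl, hε0.le⟩, μ₀, ⟨‹_›, hmean, hvar⟩, ?_⟩
    simp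
  have hTne : T.Nonempty := ⟨VaR μ₀ α, μ₀, hμ₀mem, rfl⟩
  have hTub : ∀ t ∈ T, t ≤ -xs := by
    rintro t ⟨μ, hμ, rfl⟩
    have := (hq_le μ hμ).1
    simp only [VaR]; linarith
  have hTlb : ∀ t ∈ T, -qs ≤ t := by
    rintro t ⟨μ, hμ, rfl⟩
    have := (hq_le μ hμ).2
    simp only [VaR]; linarith
  have hTbdd : BddAbove T := ⟨-xs, hTub⟩
  have hTbddb : BddBelow T := ⟨-qs, hTlb⟩
  have hmix : ∀ a : ℝ, a < 0 → ∃ μ ∈ Lε,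
      (∀ z : ℝ, z < 0 → distFun μ z ≤ (1-ε) * distFun μ₀ z + ε * (1/(1+a^2))) ∧
      distFun μ a = (1-ε) * distFun μ₀ a + ε * (1/(1+a^2)) := by
    intro a ha
    have hbpos : (0:ℝ) < -1/a := div_pos_iff.mpr (Or.inr ⟨by norm_num, ha⟩)
    obtain ⟨ν, hνP, hν1, hν2, hνle, hνa⟩ := ExtremalVaRAux.twoPoint a ha
    haveI := hνP
    refine ⟨ENNReal.ofReal (1-ε) • μ₀ + ENNReal.ofReal ε • ν, ?_, ?_, ?_⟩
    · rw [hLε]; exact ⟨ε, ⟨hε0.le, le_rfl⟩, ν, ⟨hνP, hν1, hν2⟩, rfl⟩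
    · intro z hz
      rw [ExtremalVaRAux.distFun_mix μ₀ ν hε0.le hε1.le]
      have h1 := hνle z (lt_trans hz hbpos)
      nlinarith [mul_le_mul_of_nonneg_left h1 hε0.le]
    · rw [ExtremalVaRAux.distFun_mix μ₀ ν hε0.le hε1.le, hνa]
  have hinf : sInf T = -qs := by
    refine le_antisymm ?_ (le_csInf hTne hTlb)
    refine le_of_forall_pos_le_add ?_
    intro δ hδ
    have hcq : qs - δ < qs := by linarith
    have hcneg : qs - δ < 0 := by linarith [hqs0]
    have hFc : distFun μ₀ (qs - δ) < β := by rw [← hFqs]; exact hmono hcq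
    obtain ⟨η, hηd⟩ : ∃ e : ℝ, e = α - (1-ε) * distFun μ₀ (qs - δ) := ⟨_, rfl⟩
    have hη : 0 < η := by
      rw [hηd]
      nlinarith [hFc, h1ε, hβα]
    have hη0 : η ≠ 0 := ne_of_gt hη
    obtain ⟨a, haeq⟩ : ∃ x : ℝ, x = min (-1) (-Real.sqrt (ε/η)) := ⟨_, rfl⟩
    have ha : a < 0 := by
      rw [haeq]; exact lt_of_le_of_lt (min_le_left _ _) (by norm_num)
    have hsq : ε / η ≤ a ^ 2 := by
      have h1 : a ≤ -Real.sqrt (ε/η) := by rw [haeq]; exact min_le_right _ _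
      have h2 : 0 ≤ Real.sqrt (ε/η) := Real.sqrt_nonneg _
      have h3 : Real.sqrt (ε/η) ^ 2 = ε/η := Real.sq_sqrt (by positivity)
      nlinarith [h1, h2, h3, sq_nonneg (a + Real.sqrt (ε/η))]
    have hp : ε * (1/(1+a^2)) < η := by
      have he : ε * (1/(1+a^2)) = ε / (1+a^2) := by ring
      rw [he, div_lt_iff₀ (by positivity)]
      have hide : η * (ε/η) = ε := by field_simp
      nlinarith [mul_le_mul_of_nonneg_left hsq hη.le, hide, hη]
    obtain ⟨μ, hμL, hμle, -⟩ := hmix a ha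
    have hlb2 : ∀ z ∈ {x : ℝ | α ≤ distFun μ x}, qs - δ ≤ z := by
      intro z hz
      by_contra hcz
      push_neg at hcz
      have hz0 : z < 0 := hcz.trans hcneg
      have h1 := hμle z hz0
      have h2 : distFun μ₀ z ≤ distFun μ₀ (qs - δ) := hmono.monotone hcz.le
      simp only [mem_setOf_eq] at hz
      nlinarith [mul_le_mul_of_nonneg_left h2 h1ε.le, hp, hηd, hz, h1]
    have hQ : qs - δ ≤ lowerQuantile μ α :=
      le_csInf ⟨qs, (hunpack μ hμL).2⟩ hlb2
    have hV : VaR μ α ≤ -qs + δ := by simp only [VaR]; linarith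
    exact le_trans (csInf_le hTbddb ⟨μ, hμL, rfl⟩) hV
  have hsup : sSup T = -xs := by
    refine le_antisymm (csSup_le hTne hTub) ?_
    refine le_of_forall_lt fun c hc => ?_
    have hm : xs < min 0 (-c) := lt_min hxsneg (by linarith)
    obtain ⟨a, ha⟩ : ∃ x : ℝ, x = (xs + min 0 (-c))/2 := ⟨_, rfl⟩
    have ha1 : xs < a := by rw [ha]; linarith [hm]
    have ha0' : a < 0 := by
      have h1 := min_le_left 0 (-c); rw [ha]; linarith [hm]
    have hac : a < -c := by
      have h1 := min_le_right 0 (-c); rw [ha]; linarith [hm]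
    obtain ⟨μ, hμL, -, hμa⟩ := hmix a ha0'
    have hga : α ≤ distFun μ a := by
      rw [hμa]
      have h5 := hgmono xs a ha1 ha0'.le
      rw [hgxs] at h5
      have h6 : g a = (1-ε) * distFun μ₀ a + ε * (1/(1+a^2)) := by
        simp only [hg]
        have : ε / (1 + a ^ 2) = ε * (1/(1+a^2)) := by ring
        linarith [this]
      linarith [h5, h6]
    have hQ : lowerQuantile μ α ≤ a := csInf_le ⟨xs, hSlb μ hμL⟩ hga
    have hV : c < VaR μ α := by simp only [VaR]; linarith
    exact lt_of_lt_of_le hV (le_csSup hTbdd ⟨μ, hμL, rfl⟩)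
  refine ⟨?_, ?_, ?_, ?_⟩
  · rw [hinf, ← hβ]
    simp only [VaR]
    rw [hlqs]
  · rw [hsup, hlq0]
    linarith [hxsq0]
  · rw [hsup, neg_neg, neg_sq]
    have h := hgxs
    simp only [hg] at h
    exact h
  · intro r hr hreq
    rw [hlq0] at hr
    rw [hsup]
    have h1 : -r < q0 := by linarith
    have h2 : g (-r) = α := by
      simp only [hg, neg_sq]
      exact hreq
    have h3 : -r = xs := by
      rcases lt_trichotomy (-r) xs with h | h | h
      · have h4 := hgmono _ _ h hxsneg.le
        rw [hgxs, h2] at h4; linarith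
      · exact h
      · have h4 := hgmono _ _ h (by linarith : -r ≤ (0:ℝ))
        rw [hgxs, h2] at h4; linarith
    linarith
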